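/- Let k be a positive integer, a an even positive integer, m < n positive integers, and T ∈ (ℝ^n)^{⊗k} a k-tensor. Then there exists a unit vector u ∈ S^{n−1} such that E_{V∼U(O_{n,m})}[‖(V^T)^{⊗k} T‖₂^a] ≤ E_{V∼U(O_{n,m})}[‖V^T u‖₂^{ak/2}] · ‖T‖₂^a, where U(O_{n,m}) is the rotation-invariant distribution on n×m matrices with orthonormal columns. -/

import Mathlib

open MeasureTheory Finset Metric

/-! ### Auxiliary combinatorial identities -/

section Aux

lemma aux_sq_expand {N M κ : Type*} [Fintype N] [Fintype M] [Fintype κ]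
    [DecidableEq N] [DecidableEq M] [DecidableEq κ]
    (V : N → M → ℝ) (T : (κ → N) → ℝ) :
    ∑ i : κ → M, (∑ j : κ → N, (∏ b, V (j b) (i b)) * T j) ^ 2
      = ∑ j : κ → N, ∑ j' : κ → N,
          (T j * T j') * ∏ d, (∑ x : M, V (j d) x * V (j' d) x) := by
  have h1 : ∀ i : κ → M,
      (∑ j : κ → N, (∏ b, V (j b) (i b)) * T j) ^ 2
        = ∑ j : κ → N, ∑ j' : κ → N,
            (T j * T j') * ∏ d, (V (j d) (i d) * V (j' d) (i d)) := by
    intro i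
    rw [sq, Finset.sum_mul_sum]
    refine Finset.sum_congr rfl fun j _ => Finset.sum_congr rfl fun j' _ => ?_
    rw [Finset.prod_mul_distrib]
    ring
  simp_rw [h1]
  rw [Finset.sum_comm]
  refine Finset.sum_congr rfl fun j _ => ?_
  rw [Finset.sum_comm]
  refine Finset.sum_congr rfl fun j' _ => ?_
  rw [← Finset.mul_sum]
  congr 1
  rw [Fintype.prod_sum fun d x => V (j d) x * V (j' d) x]

def pairCurry {N κ : Type*} (r : ℕ) :
    ((Fin r × κ → N) × (Fin r × κ → N)) ≃ (Fin r → (κ → N) × (κ → N)) where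
  toFun q := fun c => (fun d => q.1 (c, d), fun d => q.2 (c, d))
  invFun p := (fun cd => (p cd.1).1 cd.2, fun cd => (p cd.1).2 cd.2)
  left_inv _ := rfl
  right_inv _ := rfl

lemma aux_pow_expand {N κ : Type*} [Fintype N] [Fintype κ] [DecidableEq N] [DecidableEq κ]
    (r : ℕ) (G : (κ → N) → (κ → N) → ℝ) :
    (∑ j : κ → N, ∑ j' : κ → N, G j j') ^ r
      = ∑ J : Fin r × κ → N, ∑ J' : Fin r × κ → N,
          ∏ c : Fin r, G (fun d => J (c, d)) (fun d => J' (c, d)) := by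
  rw [← Fintype.sum_prod_type (f := fun (q : (κ → N) × (κ → N)) => G q.1 q.2),
    Fintype.sum_pow]
  rw [← Fintype.sum_prod_type
    (f := fun (q : (Fin r × κ → N) × (Fin r × κ → N)) =>
      ∏ c : Fin r, G (fun d => q.1 (c, d)) (fun d => q.2 (c, d)))]
  exact (Fintype.sum_equiv (pairCurry r) _ _ fun q => rfl).symm

def funCurry {N κ : Type*} (r : ℕ) : (Fin r × κ → N) ≃ (Fin r → (κ → N)) where
  toFun J := fun c d => J (c, d)
  invFun p := fun cd => p cd.1 cd.2
  left_inv _ := rfl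
  right_inv _ := rfl

lemma aux_pow_expand1 {N κ : Type*} [Fintype N] [Fintype κ] [DecidableEq N] [DecidableEq κ]
    (r : ℕ) (g : (κ → N) → ℝ) :
    (∑ j : κ → N, g j) ^ r = ∑ J : Fin r × κ → N, ∏ c : Fin r, g (fun d => J (c, d)) := by
  rw [Fintype.sum_pow]
  exact (Fintype.sum_equiv (funCurry r) _ _ fun q => rfl).symm

lemma aux_pointwise {N M κ : Type*} [Fintype N] [Fintype M] [Fintype κ]
    [DecidableEq N] [DecidableEq M] [DecidableEq κ]
    (r : ℕ) (V : N → M → ℝ) (T : (κ → N) → ℝ) :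
    (∑ i : κ → M, (∑ j : κ → N, (∏ b, V (j b) (i b)) * T j) ^ 2) ^ r
      = ∑ J : Fin r × κ → N, ∑ J' : Fin r × κ → N,
          ((∏ c : Fin r, T (fun d => J (c, d))) * (∏ c : Fin r, T (fun d => J' (c, d))))
            * ∏ b : Fin r × κ, (∑ x : M, V (J b) x * V (J' b) x) := by
  rw [aux_sq_expand V T, aux_pow_expand r]
  refine Finset.sum_congr rfl fun J _ => Finset.sum_congr rfl fun J' _ => ?_
  rw [Finset.prod_mul_distrib, Finset.prod_mul_distrib, Fintype.prod_prod_type]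

end Aux

/-! ### Facts about matrices with orthonormal columns -/

section Ortho

variable {n m : ℕ}

/-- Entries of `V Vᵀ`. -/
def Pmat (V : Fin n → Fin m → ℝ) (x y : Fin n) : ℝ := ∑ i, V x i * V y i

/-- `V (Vᵀ u)`. -/
def Qvec (V : Fin n → Fin m → ℝ) (u : Fin n → ℝ) (x : Fin n) : ℝ :=
  ∑ i, V x i * (∑ j, V j i * u j)

lemma sum_sq_of_ortho {M N : Type*} [Fintype M] [Fintype N] [DecidableEq M]
    (W : N → M → ℝ) (hW : ∀ i i' : M, ∑ x, W x i * W x i' = if i = i' then 1 else 0)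
    (c : M → ℝ) : ∑ x, (∑ i, W x i * c i) ^ 2 = ∑ i, c i ^ 2 := by
  have h1 : ∀ x : N, (∑ i, W x i * c i) ^ 2
      = ∑ i, ∑ i', (c i * c i') * (W x i * W x i') := by
    intro x
    rw [sq, Finset.sum_mul_sum]
    exact Finset.sum_congr rfl fun i _ => Finset.sum_congr rfl fun i' _ => by ring
  simp_rw [h1]
  rw [Finset.sum_comm]
  refine Finset.sum_congr rfl fun i _ => ?_
  rw [Finset.sum_comm]
  have h3 : ∀ i' : M, ∑ x : N, (c i * c i') * (W x i * W x i')
      = (c i * c i') * (if i = i' then (1:ℝ) else 0) := by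
    intro i'
    rw [← Finset.mul_sum, hW i i']
  simp_rw [h3]
  simp [mul_ite, sq]

variable {V : Fin n → Fin m → ℝ}
  (hV : ∀ i i' : Fin m, ∑ j, V j i * V j i' = if i = i' then 1 else 0)

include hV

lemma good_f2 (u : Fin n → ℝ) :
    ∑ x, (Qvec V u x) ^ 2 = ∑ i, (∑ j, V j i * u j) ^ 2 := by
  unfold Qvec
  exact sum_sq_of_ortho V hV _

lemma good_f3 (u : Fin n → ℝ) (hu : ∑ j, u j ^ 2 = 1) :
    ∑ i, (∑ j, V j i * u j) ^ 2 ≤ 1 := by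
  set s : ℝ := ∑ i, (∑ j, V j i * u j) ^ 2 with hs
  have hs0 : 0 ≤ s := Finset.sum_nonneg fun i _ => sq_nonneg _
  have h1 : ∑ x, Qvec V u x * u x = s := by
    unfold Qvec
    rw [hs]
    have e1 : ∀ x : Fin n, (∑ i, V x i * (∑ j, V j i * u j)) * u x
        = ∑ i, (∑ j, V j i * u j) * (V x i * u x) := by
      intro x; rw [Finset.sum_mul]; exact Finset.sum_congr rfl fun i _ => by ring
    simp_rw [e1]
    rw [Finset.sum_comm]
    refine Finset.sum_congr rfl fun i _ => ?_
    rw [← Finset.mul_sum, sq]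
  have h2 := Finset.sum_mul_sq_le_sq_mul_sq Finset.univ (Qvec V u) u
  rw [h1, good_f2 hV u, hu, mul_one, ← hs] at h2
  nlinarith

lemma good_diag (x : Fin n) : (0:ℝ) ≤ Pmat V x x ∧ Pmat V x x ≤ 1 := by
  constructor
  · exact Finset.sum_nonneg fun i _ => mul_self_nonneg _
  · have h1 : Pmat V x x = ∑ i, (∑ j, V j i * (if j = x then (1:ℝ) else 0)) ^ 2 := by
      unfold Pmat
      refine Finset.sum_congr rfl fun i _ => ?_
      have e2 : (∑ j, V j i * (if j = x then (1:ℝ) else 0)) = V x i := by simp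
      rw [e2, sq]
    rw [h1]
    refine good_f3 hV _ ?_
    have e3 : ∀ j : Fin n, ((if j = x then (1:ℝ) else 0)) ^ 2 = if j = x then 1 else 0 := by
      intro j; split <;> norm_num
    simp [e3]

lemma good_Pabs (x y : Fin n) : |Pmat V x y| ≤ 1 := by
  have hcs := Finset.sum_mul_sq_le_sq_mul_sq Finset.univ (V x) (V y)
  have hx := good_diag hV x
  have hy := good_diag hV y
  have hxx : ∑ i, V x i ^ 2 = Pmat V x x := by unfold Pmat; exact Finset.sum_congr rfl fun i _ => (by ring)
  have hyy : ∑ i, V y i ^ 2 = Pmat V y y := by unfold Pmat; exact Finset.sum_congr rfl fun i _ => (by ring)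
  have hxy : (∑ i, V x i * V y i) = Pmat V x y := rfl
  rw [hxx, hyy, hxy] at hcs
  rw [abs_le]
  constructor <;> nlinarith

end Ortho


lemma rayleigh_top {ι : Type*} [Fintype ι] [DecidableEq ι] [Nonempty ι]
    (A : Matrix ι ι ℝ) (hA : ∀ i j, A i j = A j i) :
    ∃ (lam : ℝ) (t : ι → ℝ), (∑ i, t i ^ 2 = 1) ∧
      (∀ j, ∑ i, A j i * t i = lam * t j) ∧
      (∀ S : ι → ℝ, ∑ i, ∑ j, (S i * S j) * A i j ≤ lam * ∑ i, S i ^ 2) := by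
  classical
  set E := EuclideanSpace ℝ ι
  set Mlin : E →L[ℝ] E :=
    LinearMap.toContinuousLinearMap (Matrix.toEuclideanLin A) with hMlin
  have happ : ∀ (x : E) (i : ι), Mlin x i = ∑ j, A i j * x j := by
    intro x i
    show (Matrix.toEuclideanLin A x) i = _
    rw [Matrix.toEuclideanLin_apply]
    simp [Matrix.mulVec, dotProduct]
  have hinner : ∀ x y : E, (inner ℝ x y : ℝ) = ∑ i, x i * y i := by
    intro x y
    rw [PiLp.inner_apply]
    exact Finset.sum_congr rfl fun i _ => by simp only [RCLike.inner_apply, conj_trivial]; ring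
  have hsym : IsSelfAdjoint Mlin := by
    rw [ContinuousLinearMap.isSelfAdjoint_iff_isSymmetric]
    intro x y
    show (inner ℝ (Mlin x) y : ℝ) = inner ℝ x (Mlin y)
    rw [hinner, hinner]
    have h1 : ∀ i, Mlin x i * y i = ∑ j, A i j * x j * y i := by
      intro i; rw [happ, Finset.sum_mul]
    have h2 : ∀ i, x i * Mlin y i = ∑ j, A i j * y j * x i := by
      intro i; rw [happ, Finset.mul_sum]; exact Finset.sum_congr rfl fun j _ => by ring
    simp_rw [h1, h2]
    rw [Finset.sum_comm]
    refine Finset.sum_congr rfl fun j _ => Finset.sum_congr rfl fun i _ => ?_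
    rw [hA i j]; ring
  -- a point on the unit sphere
  obtain ⟨i0⟩ := (inferInstance : Nonempty ι)
  have hv0 : (EuclideanSpace.single i0 (1:ℝ) : E) ∈ sphere (0:E) 1 := by
    simp [EuclideanSpace.norm_single]
  obtain ⟨t₀, ht₀mem, htmax⟩ :=
    (isCompact_sphere (0:E) 1).exists_isMaxOn ⟨_, hv0⟩
      Mlin.reApplyInnerSelf_continuous.continuousOn
  have ht₀ : ‖t₀‖ = 1 := by simpa using ht₀mem
  have ht₀ne : t₀ ≠ 0 := by
    intro h; rw [h] at ht₀; simp at ht₀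
  have heig := hsym.hasEigenvector_of_isMaxOn ht₀ne (by rwa [ht₀])
  set lam : ℝ := ⨆ x : { x : E // x ≠ 0 }, Mlin.rayleighQuotient x with hlam
  have hMt : Mlin t₀ = lam • t₀ := by
    have := heig.1
    rwa [Module.End.mem_eigenspace_iff] at this
  have hinner_self : (inner ℝ t₀ t₀ : ℝ) = 1 := by
    rw [real_inner_self_eq_norm_sq, ht₀]; norm_num
  -- the max property in inner-product form
  have hmax2 : ∀ S : E, (inner ℝ (Mlin S) S : ℝ) ≤ lam * ‖S‖ ^ 2 := by
    have hlamval : Mlin.reApplyInnerSelf t₀ = lam := by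
      rw [ContinuousLinearMap.reApplyInnerSelf_apply]
      rw [hMt]
      rw [real_inner_smul_left, hinner_self]
      simp
    intro S
    rcases eq_or_ne S 0 with rfl | hS
    · simp
    · have hSn : (0:ℝ) < ‖S‖ := norm_pos_iff.mpr hS
      set x : E := ‖S‖⁻¹ • S with hx
      have hxs : x ∈ sphere (0:E) 1 := by
        simp [hx, norm_smul, abs_of_pos (inv_pos.mpr hSn), inv_mul_cancel₀ hSn.ne']
      have hmle := htmax hxs
      simp only [Set.mem_setOf_eq] at hmle
      have hre : Mlin.reApplyInnerSelf x = ‖S‖⁻¹ ^ 2 * (inner ℝ (Mlin S) S : ℝ) := by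
        rw [ContinuousLinearMap.reApplyInnerSelf_apply, hx]
        rw [ContinuousLinearMap.map_smul, real_inner_smul_left, real_inner_smul_right]
        ring_nf
        rfl
      rw [hre, hlamval] at hmle
      have hpos : (0:ℝ) < ‖S‖ ^ 2 := by positivity
      calc (inner ℝ (Mlin S) S : ℝ) = (‖S‖⁻¹ ^ 2 * (inner ℝ (Mlin S) S : ℝ)) * ‖S‖ ^ 2 := by
            field_simp
        _ ≤ lam * ‖S‖ ^ 2 := mul_le_mul_of_nonneg_right hmle hpos.le
  refine ⟨lam, fun i => t₀ i, ?_, ?_, ?_⟩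
  · have := hinner_self
    rw [hinner] at this
    simpa [sq] using this
  · intro j
    have := congrFun (congrArg (fun (z : E) => (z : ι → ℝ)) hMt) j
    have h1 : Mlin t₀ j = lam * t₀ j := by
      have h2 : (lam • t₀) j = lam * t₀ j := rfl
      rw [← h2]; exact this
    rw [← happ t₀ j, h1]
  · intro S
    have := hmax2 ((WithLp.equiv 2 (ι → ℝ)).symm S)
    have hco : ∀ i, ((WithLp.equiv 2 (ι → ℝ)).symm S) i = S i := fun i => rfl
    rw [hinner] at this
    have hn2 : ‖(WithLp.equiv 2 (ι → ℝ)).symm S‖ ^ 2 = ∑ i, S i ^ 2 := by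
      rw [← real_inner_self_eq_norm_sq, hinner]
      exact Finset.sum_congr rfl fun i _ => by rw [hco, sq]
    rw [hn2] at this
    calc ∑ i, ∑ j, (S i * S j) * A i j
        = ∑ i, Mlin ((WithLp.equiv 2 (ι → ℝ)).symm S) i * ((WithLp.equiv 2 (ι → ℝ)).symm S) i := by
          refine Finset.sum_congr rfl fun i _ => ?_
          rw [happ, Finset.sum_mul, hco]
          exact Finset.sum_congr rfl fun j _ => by rw [hco]; ring
      _ ≤ lam * ∑ i, S i ^ 2 := this


lemma tensor_max {ι : Type*} [Fintype ι] [DecidableEq ι] {n : ℕ} (hn : 0 < n)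
    (T₀ : (ι → Fin n) → ℝ) :
    ∃ u : ι → Fin n → ℝ, (∀ b, ∑ x, u b x ^ 2 = 1) ∧
      (∀ v : ι → Fin n → ℝ,
        |∑ J : ι → Fin n, (∏ b, v b (J b)) * T₀ J|
          ≤ (∏ b, Real.sqrt (∑ x, v b x ^ 2))
              * |∑ J : ι → Fin n, (∏ b, u b (J b)) * T₀ J|) ∧
      (∀ J : ι → Fin n, |T₀ J| ≤ |∑ J' : ι → Fin n, (∏ b, u b (J' b)) * T₀ J'|) := by
  classical
  set Φ : (ι → Fin n → ℝ) → ℝ := fun w => ∑ J : ι → Fin n, (∏ b, w b (J b)) * T₀ J with hΦ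
  have hΦcont : Continuous Φ := by
    apply continuous_finset_sum
    intro J _
    exact (continuous_finset_prod _ fun b _ =>
      (continuous_apply (J b)).comp (continuous_apply b)).mul continuous_const
  set Ks : Set (Fin n → ℝ) := {v | ∑ x, v x ^ 2 = 1} with hKs
  have hKscont : Continuous fun v : Fin n → ℝ => ∑ x, v x ^ 2 :=
    continuous_finset_sum _ fun x _ => (continuous_apply x).pow 2
  have hKsc : IsCompact Ks := by
    apply Metric.isCompact_of_isClosed_isBounded
    · exact isClosed_eq hKscont continuous_const
    · apply (Metric.isBounded_closedBall (x := (0 : Fin n → ℝ)) (r := 1)).subset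
      intro v hv
      rw [Metric.mem_closedBall, dist_zero_right]
      rw [pi_norm_le_iff_of_nonneg zero_le_one]
      intro x
      have h1 : v x ^ 2 ≤ 1 := by
        have := Finset.single_le_sum (f := fun x => v x ^ 2)
          (fun x _ => sq_nonneg _) (Finset.mem_univ x)
        rw [hv] at this
        exact this
      rw [Real.norm_eq_abs, abs_le]
      constructor <;> nlinarith
  have hKc : IsCompact (Set.pi Set.univ fun _ : ι => Ks) := isCompact_univ_pi fun _ => hKsc
  have hne : (Set.pi Set.univ fun _ : ι => Ks).Nonempty := by
    set e0 : Fin n := ⟨0, hn⟩ with he0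
    refine ⟨fun _ x => if x = e0 then 1 else 0, ?_⟩
    intro b _
    show (∑ x, (if x = e0 then (1:ℝ) else 0) ^ 2) = 1
    have e3 : ∀ x : Fin n, ((if x = e0 then (1:ℝ) else 0)) ^ 2
        = if x = e0 then 1 else 0 := by intro x; split <;> norm_num
    simp [e3]
  obtain ⟨u, huK, humax⟩ := hKc.exists_isMaxOn hne
    ((continuous_abs.comp hΦcont).continuousOn)
  have huK' : ∀ b, ∑ x, u b x ^ 2 = 1 := by
    intro b
    exact huK b (Set.mem_univ b)
  refine ⟨u, huK', ?_, ?_⟩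
  · intro v
    show |Φ v| ≤ (∏ b, Real.sqrt (∑ x, v b x ^ 2)) * |Φ u|
    by_cases h0 : ∃ b, ∑ x, v b x ^ 2 = 0
    · obtain ⟨b, hb⟩ := h0
      have hvb : ∀ x, v b x = 0 := by
        intro x
        have h1 : v b x ^ 2 ≤ 0 := by
          have := Finset.single_le_sum (f := fun x => v b x ^ 2)
            (fun x _ => sq_nonneg _) (Finset.mem_univ x)
          rw [hb] at this
          exact this
        nlinarith [sq_nonneg (v b x)]
      have hΦv : Φ v = 0 := by
        rw [hΦ]
        refine Finset.sum_eq_zero fun J _ => ?_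
        rw [Finset.prod_eq_zero (Finset.mem_univ b) (hvb (J b))]
        ring
      rw [hΦv]
      simp only [abs_zero]
      positivity
    · push_neg at h0
      have hpos : ∀ b, 0 < ∑ x, v b x ^ 2 := by
        intro b
        rcases (Finset.sum_nonneg fun x _ => sq_nonneg (v b x)).lt_or_eq with h | h
        · exact h
        · exact absurd h.symm (h0 b)
      set w : ι → Fin n → ℝ := fun b x => v b x / Real.sqrt (∑ y, v b y ^ 2) with hw
      have hsq : ∀ b, Real.sqrt (∑ y, v b y ^ 2) ^ 2 = ∑ y, v b y ^ 2 :=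
        fun b => Real.sq_sqrt (Finset.sum_nonneg fun x _ => sq_nonneg _)
      have hsqpos : ∀ b, 0 < Real.sqrt (∑ y, v b y ^ 2) :=
        fun b => Real.sqrt_pos.mpr (hpos b)
      have hwK : w ∈ Set.pi Set.univ fun _ : ι => Ks := by
        intro b _
        show (∑ x, (v b x / Real.sqrt (∑ y, v b y ^ 2)) ^ 2) = 1
        have : ∀ x : Fin n, (v b x / Real.sqrt (∑ y, v b y ^ 2)) ^ 2
            = v b x ^ 2 / (∑ y, v b y ^ 2) := by
          intro x
          rw [div_pow, hsq b]
        simp_rw [this]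
        rw [← Finset.sum_div, div_self (hpos b).ne']
      have hfact : Φ v = (∏ b, Real.sqrt (∑ x, v b x ^ 2)) * Φ w := by
        rw [hΦ, Finset.mul_sum]
        refine Finset.sum_congr rfl fun J _ => ?_
        rw [← mul_assoc, ← Finset.prod_mul_distrib]
        congr 1
        refine Finset.prod_congr rfl fun b _ => ?_
        show v b (J b) = Real.sqrt (∑ x, v b x ^ 2) * (v b (J b) / Real.sqrt (∑ y, v b y ^ 2))
        rw [mul_div_assoc']
        exact (mul_div_cancel_left₀ _ (hsqpos b).ne').symm
      rw [hfact, abs_mul, abs_of_nonneg (Finset.prod_nonneg fun b _ => Real.sqrt_nonneg _)]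
      have hmw := humax hwK
      simp only [Function.comp_apply, Set.mem_setOf_eq] at hmw
      exact mul_le_mul_of_nonneg_left hmw (Finset.prod_nonneg fun b _ => Real.sqrt_nonneg _)
  · intro J
    set wJ : ι → Fin n → ℝ := fun b x => if x = J b then 1 else 0 with hwJ
    have hwJK : wJ ∈ Set.pi Set.univ fun _ : ι => Ks := by
      intro b _
      show (∑ x, (if x = J b then (1:ℝ) else 0) ^ 2) = 1
      have e3 : ∀ x : Fin n, ((if x = J b then (1:ℝ) else 0)) ^ 2
          = if x = J b then 1 else 0 := by intro x; split <;> norm_num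
      simp [e3]
    have hΦwJ : Φ wJ = T₀ J := by
      rw [hΦ]
      have hprod : ∀ J' : ι → Fin n,
          (∏ b, wJ b (J' b)) = if J' = J then (1:ℝ) else 0 := by
        intro J'
        by_cases hJJ : J' = J
        · subst hJJ
          simp [hwJ]
        · have hb : ∃ b, J' b ≠ J b := by
            by_contra hcon
            push_neg at hcon
            exact hJJ (funext hcon)
          obtain ⟨b, hb⟩ := hb
          rw [if_neg hJJ]
          refine Finset.prod_eq_zero (Finset.mem_univ b) ?_
          simp [hwJ, hb]
      simp_rw [hprod]
      simp [Finset.sum_ite_eq' Finset.univ J]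
    have hmw := humax hwJK
    simp only [Function.comp_apply, Set.mem_setOf_eq] at hmw
    show |T₀ J| ≤ |Φ u|
    rw [← hΦwJ]
    exact hmw


lemma amgm_pow {ι : Type*} [Fintype ι] [Nonempty ι] (x : ι → ℝ) (hx : ∀ b, 0 ≤ x b) :
    ∏ b, x b ≤ (Fintype.card ι : ℝ)⁻¹ * ∑ b, x b ^ (Fintype.card ι) := by
  set p := Fintype.card ι with hp
  have hp0 : 0 < p := Fintype.card_pos
  have hpR : (0:ℝ) < (p:ℝ) := by exact_mod_cast hp0
  have h := Real.geom_mean_le_arith_mean_weighted Finset.univ (fun _ => (p:ℝ)⁻¹)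
    (fun b => x b ^ p) (fun _ _ => by positivity) (by
      rw [Finset.sum_const, Finset.card_univ, ← hp, nsmul_eq_mul, mul_inv_cancel₀ hpR.ne'])
    (fun b _ => pow_nonneg (hx b) p)
  have h2 : ∀ b : ι, (x b ^ p : ℝ) ^ ((p:ℝ)⁻¹) = x b := by
    intro b
    rw [← Real.rpow_natCast (x b) p, ← Real.rpow_mul (hx b), mul_inv_cancel₀ hpR.ne',
      Real.rpow_one]
  calc ∏ b, x b = ∏ b, (x b ^ p : ℝ) ^ ((p:ℝ)⁻¹) := by
        exact (Finset.prod_congr rfl fun b _ => h2 b).symm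
    _ ≤ ∑ b, (p:ℝ)⁻¹ * x b ^ p := h
    _ = (p:ℝ)⁻¹ * ∑ b, x b ^ p := by rw [Finset.mul_sum]

lemma integrable_of_bounded {α : Type*} [MeasurableSpace α] {μ : Measure α}
    [IsProbabilityMeasure μ] {f : α → ℝ} (hf : AEStronglyMeasurable f μ) (C : ℝ)
    (h : ∀ᵐ x ∂μ, |f x| ≤ C) : Integrable f μ := by
  refine Integrable.mono' (integrable_const C) hf ?_
  simpa [Real.norm_eq_abs] using h

section
variable {n m : ℕ} {ι : Type*} [Fintype ι] [DecidableEq ι]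

lemma contPmat (x y : Fin n) :
    Continuous fun V : Fin n → Fin m → ℝ => Pmat V x y :=
  continuous_finset_sum _ fun i _ =>
    (continuous_apply_apply x i).mul
      (continuous_apply_apply y i)

lemma contProdP (J J' : ι → Fin n) :
    Continuous fun V : Fin n → Fin m → ℝ => ∏ b, Pmat V (J b) (J' b) :=
  continuous_finset_prod _ fun b _ => contPmat (J b) (J' b)

lemma good_prodP_le {V : Fin n → Fin m → ℝ}
    (hV : ∀ i i' : Fin m, ∑ j, V j i * V j i' = if i = i' then 1 else 0)
    (J J' : ι → Fin n) : |∏ b, Pmat V (J b) (J' b)| ≤ 1 := by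
  rw [Finset.abs_prod]
  exact Finset.prod_le_one (fun b _ => abs_nonneg _) (fun b _ => good_Pabs hV (J b) (J' b))

lemma integrable_prodP (μ : Measure (Fin n → Fin m → ℝ)) [IsProbabilityMeasure μ]
    (hsupp : ∀ᵐ V ∂μ, ∀ i i' : Fin m,
      ∑ j : Fin n, V j i * V j i' = if i = i' then 1 else 0)
    (J J' : ι → Fin n) :
    Integrable (fun V => ∏ b, Pmat V (J b) (J' b)) μ := by
  refine integrable_of_bounded (contProdP J J').aestronglyMeasurable 1 ?_
  filter_upwards [hsupp] with V hV
  exact good_prodP_le hV J J'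

lemma stmt12_swap_integral (μ : Measure (Fin n → Fin m → ℝ)) [IsProbabilityMeasure μ]
    (hsupp : ∀ᵐ V ∂μ, ∀ i i' : Fin m,
      ∑ j : Fin n, V j i * V j i' = if i = i' then 1 else 0)
    (W : (ι → Fin n) → ℝ) :
    ∫ V, (∑ i : ι → Fin m, (∑ J : ι → Fin n, (∏ b, V (J b) (i b)) * W J) ^ 2) ∂μ
      = ∑ J : ι → Fin n, ∑ J' : ι → Fin n,
          (W J * W J') * ∫ V, (∏ b, Pmat V (J b) (J' b)) ∂μ := by
  have h1 : ∀ V : Fin n → Fin m → ℝ,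
      (∑ i : ι → Fin m, (∑ J : ι → Fin n, (∏ b, V (J b) (i b)) * W J) ^ 2)
        = ∑ J : ι → Fin n, ∑ J' : ι → Fin n,
            (W J * W J') * ∏ b, Pmat V (J b) (J' b) := by
    intro V
    exact aux_sq_expand V W
  rw [integral_congr_ae (Filter.Eventually.of_forall h1)]
  rw [integral_finset_sum _ (fun J _ => integrable_finset_sum _ (fun J' _ =>
    ((integrable_prodP μ hsupp J J').const_mul _)))]
  refine Finset.sum_congr rfl fun J _ => ?_
  rw [integral_finset_sum _ (fun J' _ => ((integrable_prodP μ hsupp J J').const_mul _))]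
  exact Finset.sum_congr rfl fun J' _ => integral_const_mul _ _

end

set_option maxHeartbeats 2000000 in
theorem stmt12 (n m k a : ℕ) (hk : 0 < k) (ha : 0 < a) (hae : Even a)
    (hm : 0 < m) (hmn : m < n)
    (T : (Fin k → Fin n) → ℝ)
    (μ : Measure (Fin n → Fin m → ℝ)) [IsProbabilityMeasure μ]
    (hsupp : ∀ᵐ V ∂μ, ∀ i i' : Fin m,
      ∑ j : Fin n, V j i * V j i' = if i = i' then 1 else 0)
    (hinv : ∀ R : Fin n → Fin n → ℝ,
      (∀ j j' : Fin n, ∑ l : Fin n, R l j * R l j' = if j = j' then 1 else 0) →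
      Measure.map (fun V => fun j i => ∑ j' : Fin n, R j j' * V j' i) μ = μ) :
    ∃ u : Fin n → ℝ, (∑ j, u j ^ 2) = 1 ∧
      (∫ V, Real.sqrt (∑ i : Fin k → Fin m,
          (∑ j : Fin k → Fin n, (∏ b : Fin k, V (j b) (i b)) * T j) ^ 2) ^ a ∂μ)
        ≤ (∫ V, Real.sqrt (∑ i : Fin m, (∑ j : Fin n, V j i * u j) ^ 2) ^ (a * k / 2) ∂μ)
          * Real.sqrt (∑ j, T j ^ 2) ^ a := by
  classical
  obtain ⟨r, hr⟩ := hae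
  subst hr
  set a := r + r with ha2
  have hr0 : 0 < r := by omega
  have hn0 : 0 < n := hm.trans hmn
  haveI : Nonempty (Fin r × Fin k) := ⟨(⟨0, hr0⟩, ⟨0, hk⟩)⟩
  haveI : Nonempty ((Fin r × Fin k) → Fin n) := ⟨fun _ => ⟨0, hn0⟩⟩
  have hp : a * k / 2 = r * k := by
    have : a * k = 2 * (r * k) := by rw [ha2]; ring
    omega
  -- the tensor power of T
  set S : ((Fin r × Fin k) → Fin n) → ℝ := fun J => ∏ c : Fin r, T (fun d => J (c, d))
    with hS
  -- the averaged operator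
  set A : Matrix ((Fin r × Fin k) → Fin n) ((Fin r × Fin k) → Fin n) ℝ :=
    fun J J' => ∫ V, (∏ b, Pmat V (J b) (J' b)) ∂μ with hA
  have hAsymm : ∀ J J', A J J' = A J' J := by
    intro J J'
    have h1 : ∀ V : Fin n → Fin m → ℝ,
        ∏ b, Pmat V (J b) (J' b) = ∏ b, Pmat V (J' b) (J b) := by
      intro V
      refine Finset.prod_congr rfl fun b _ => ?_
      unfold Pmat
      exact Finset.sum_congr rfl fun i _ => mul_comm _ _
    exact integral_congr_ae (Filter.Eventually.of_forall h1)
  obtain ⟨lam, t, ht1, hteig, hmax⟩ := rayleigh_top A hAsymm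
  -- Step 1: the LHS as a quadratic form in `A`
  have hsq : ∀ V : Fin n → Fin m → ℝ,
      Real.sqrt (∑ i : Fin k → Fin m,
          (∑ j : Fin k → Fin n, (∏ b : Fin k, V (j b) (i b)) * T j) ^ 2) ^ a
        = ∑ J, ∑ J', (S J * S J') * ∏ b, Pmat V (J b) (J' b) := by
    intro V
    have h0 : (0:ℝ) ≤ ∑ i : Fin k → Fin m,
        (∑ j : Fin k → Fin n, (∏ b : Fin k, V (j b) (i b)) * T j) ^ 2 :=
      Finset.sum_nonneg fun _ _ => sq_nonneg _
    rw [ha2, show r + r = 2 * r from (two_mul r).symm, pow_mul, Real.sq_sqrt h0]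
    exact aux_pointwise r V T
  have hLHS : (∫ V, Real.sqrt (∑ i : Fin k → Fin m,
          (∑ j : Fin k → Fin n, (∏ b : Fin k, V (j b) (i b)) * T j) ^ 2) ^ a ∂μ)
      = ∑ J, ∑ J', (S J * S J') * A J J' := by
    rw [integral_congr_ae (Filter.Eventually.of_forall hsq)]
    rw [integral_finset_sum _ fun J _ => integrable_finset_sum _ fun J' _ =>
      ((integrable_prodP μ hsupp J J').const_mul _)]
    refine Finset.sum_congr rfl fun J _ => ?_
    rw [integral_finset_sum _ fun J' _ => ((integrable_prodP μ hsupp J J').const_mul _)]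
    exact Finset.sum_congr rfl fun J' _ => integral_const_mul _ _
  have hSnorm : ∑ J, S J ^ 2 = (∑ j, T j ^ 2) ^ r := by
    have h1 : ∀ J : (Fin r × Fin k) → Fin n,
        S J ^ 2 = ∏ c : Fin r, (T fun d => J (c, d)) ^ 2 := by
      intro J
      rw [hS]
      exact (Finset.prod_pow _ _ _).symm
    calc ∑ J, S J ^ 2 = ∑ J : (Fin r × Fin k) → Fin n,
          ∏ c : Fin r, (T fun d => J (c, d)) ^ 2 :=
        Finset.sum_congr rfl fun J _ => h1 J
      _ = (∑ j, T j ^ 2) ^ r := (aux_pow_expand1 r (fun j => T j ^ 2)).symm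
  -- lam is nonnegative
  have hlam_eq : lam = ∑ J, ∑ J', (t J * t J') * A J J' := by
    calc lam = lam * ∑ J, t J ^ 2 := by rw [ht1, mul_one]
      _ = ∑ J, (lam * t J) * t J := by
          rw [Finset.mul_sum]
          exact Finset.sum_congr rfl fun J _ => by ring
      _ = ∑ J, (∑ J', A J J' * t J') * t J :=
          Finset.sum_congr rfl fun J _ => by rw [hteig J]
      _ = ∑ J, ∑ J', (t J * t J') * A J J' := by
          refine Finset.sum_congr rfl fun J _ => ?_
          rw [Finset.sum_mul]
          exact Finset.sum_congr rfl fun J' _ => by ring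
  have hlam_nonneg : 0 ≤ lam := by
    rw [hlam_eq, ← stmt12_swap_integral μ hsupp t]
    exact integral_nonneg fun V => Finset.sum_nonneg fun i _ => sq_nonneg _
  -- Step 2: the maximizing rank-one tensor
  obtain ⟨u, huunit, humulti, hubig⟩ := tensor_max hn0 t
  set Ft : ℝ := |∑ J : (Fin r × Fin k) → Fin n, (∏ b, u b (J b)) * t J| with hFt
  have hFt_pos : 0 < Ft := by
    have hex : ∃ J, t J ≠ 0 := by
      by_contra hcon
      push_neg at hcon
      have := ht1
      simp only [hcon] at this
      simp at this
    obtain ⟨J, hJ⟩ := hex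
    exact lt_of_lt_of_le (abs_pos.mpr hJ) (hubig J)
  -- Step 3: duality
  have e3 : ∀ (V : Fin n → Fin m → ℝ) (w : Fin n → ℝ) (y : Fin n),
      ∑ x, w x * Pmat V x y = Qvec V w y := by
    intro V w y
    unfold Pmat Qvec
    have h1 : ∀ x, w x * ∑ i, V x i * V y i = ∑ i, (V y i) * (V x i * w x) := by
      intro x
      rw [Finset.mul_sum]
      exact Finset.sum_congr rfl fun i _ => by ring
    simp_rw [h1]
    rw [Finset.sum_comm]
    exact Finset.sum_congr rfl fun i _ => by rw [← Finset.mul_sum]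
  have hptdual : ∀ V : Fin n → Fin m → ℝ,
      ∑ J : (Fin r × Fin k) → Fin n, ∑ J' : (Fin r × Fin k) → Fin n, (((∏ b, u b (J b)) * t J') * ∏ b, Pmat V (J b) (J' b))
        = ∑ J' : (Fin r × Fin k) → Fin n, (∏ b, Qvec V (u b) (J' b)) * t J' := by
    intro V
    rw [Finset.sum_comm]
    refine Finset.sum_congr rfl fun J' _ => ?_
    have e1 : ∀ J : (Fin r × Fin k) → Fin n,
        ((∏ b, u b (J b)) * t J') * ∏ b, Pmat V (J b) (J' b)
          = t J' * ∏ b, (u b (J b) * Pmat V (J b) (J' b)) := by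
      intro J
      rw [Finset.prod_mul_distrib]
      ring
    simp_rw [e1]
    rw [← Finset.mul_sum]
    rw [← Fintype.prod_sum fun (b : Fin r × Fin k) (x : Fin n) => u b x * Pmat V x (J' b)]
    rw [Finset.prod_congr rfl fun b _ => e3 V (u b) (J' b)]
    ring
  -- continuity facts
  have contQ : ∀ (w : Fin n → ℝ) (y : Fin n),
      Continuous fun V : Fin n → Fin m → ℝ => Qvec V w y := by
    intro w y
    apply continuous_finset_sum
    intro i _
    exact ((continuous_apply i).comp (continuous_apply y)).mul
      (continuous_finset_sum _ fun j _ =>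
        (continuous_apply_apply j i).mul continuous_const)
  have contPhiQ : Continuous fun V : Fin n → Fin m → ℝ =>
      ∑ J' : (Fin r × Fin k) → Fin n, (∏ b, Qvec V (u b) (J' b)) * t J' :=
    continuous_finset_sum _ fun J' _ =>
      (continuous_finset_prod _ fun b _ => contQ (u b) (J' b)).mul continuous_const
  set g : (Fin n → Fin m → ℝ) → ℝ :=
    fun V => ∏ b : Fin r × Fin k, Real.sqrt (∑ i, (∑ j, V j i * u b j) ^ 2) with hg
  have contg : Continuous g := by
    rw [hg]
    refine continuous_finset_prod _ fun b _ => Real.continuous_sqrt.comp ?_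
    exact continuous_finset_sum _ fun i _ =>
      (continuous_finset_sum _ fun j _ =>
        ((continuous_apply i).comp (continuous_apply j)).mul continuous_const).pow 2
  have hg_nonneg : ∀ V, 0 ≤ g V :=
    fun V => Finset.prod_nonneg fun b _ => Real.sqrt_nonneg _
  have hg_le_one : ∀ᵐ V ∂μ, g V ≤ 1 := by
    filter_upwards [hsupp] with V hV
    refine Finset.prod_le_one (fun b _ => Real.sqrt_nonneg _) fun b _ => ?_
    rw [show (1:ℝ) = Real.sqrt 1 from Real.sqrt_one.symm]
    exact Real.sqrt_le_sqrt (good_f3 hV (u b) (huunit b))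
  have hPhiQ_bound : ∀ᵐ V ∂μ,
      |∑ J' : (Fin r × Fin k) → Fin n, (∏ b, Qvec V (u b) (J' b)) * t J'| ≤ g V * Ft := by
    filter_upwards [hsupp] with V hV
    have h1 := humulti fun b => Qvec V (u b)
    have h2 : (∏ b : Fin r × Fin k, Real.sqrt (∑ x, Qvec V (u b) x ^ 2)) = g V := by
      rw [hg]
      exact Finset.prod_congr rfl fun b _ => by rw [good_f2 hV (u b)]
    rw [h2] at h1
    exact h1
  have hint_g : Integrable g μ := by
    refine integrable_of_bounded contg.aestronglyMeasurable 1 ?_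
    filter_upwards [hg_le_one] with V h1
    rw [abs_of_nonneg (hg_nonneg V)]
    exact h1
  have hint_PhiQ : Integrable (fun V => ∑ J' : (Fin r × Fin k) → Fin n, (∏ b, Qvec V (u b) (J' b)) * t J') μ := by
    refine integrable_of_bounded contPhiQ.aestronglyMeasurable Ft ?_
    filter_upwards [hPhiQ_bound, hg_le_one] with V h1 h2
    calc |∑ J' : (Fin r × Fin k) → Fin n, (∏ b, Qvec V (u b) (J' b)) * t J'| ≤ g V * Ft := h1
      _ ≤ 1 * Ft := mul_le_mul_of_nonneg_right h2 hFt_pos.le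
      _ = Ft := one_mul _
  have halpha : lam * (∑ J : (Fin r × Fin k) → Fin n, (∏ b, u b (J b)) * t J)
      = ∫ V, ∑ J' : (Fin r × Fin k) → Fin n, (∏ b, Qvec V (u b) (J' b)) * t J' ∂μ := by
    have h1 : lam * (∑ J : (Fin r × Fin k) → Fin n, (∏ b, u b (J b)) * t J)
        = ∑ J, ∑ J', (((∏ b, u b (J b)) * t J') * A J J') := by
      calc lam * (∑ J : (Fin r × Fin k) → Fin n, (∏ b, u b (J b)) * t J)
          = ∑ J : (Fin r × Fin k) → Fin n, (∏ b, u b (J b)) * (lam * t J) := by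
            rw [Finset.mul_sum]
            exact Finset.sum_congr rfl fun J _ => by ring
        _ = ∑ J : (Fin r × Fin k) → Fin n, (∏ b, u b (J b)) * (∑ J', A J J' * t J') :=
            Finset.sum_congr rfl fun J _ => by rw [hteig J]
        _ = ∑ J, ∑ J', (((∏ b, u b (J b)) * t J') * A J J') := by
            refine Finset.sum_congr rfl fun J _ => ?_
            rw [Finset.mul_sum]
            exact Finset.sum_congr rfl fun J' _ => by ring
    rw [h1]
    have h2 : ∀ (J J' : (Fin r × Fin k) → Fin n),
        ((∏ b, u b (J b)) * t J') * A J J'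
          = ∫ V, (((∏ b, u b (J b)) * t J') * ∏ b, Pmat V (J b) (J' b)) ∂μ := by
      intro J J'
      rw [hA]
      exact (integral_const_mul _ _).symm
    calc ∑ J, ∑ J', (((∏ b, u b (J b)) * t J') * A J J')
        = ∑ J : (Fin r × Fin k) → Fin n, ∑ J' : (Fin r × Fin k) → Fin n, ∫ V, (((∏ b, u b (J b)) * t J') * ∏ b, Pmat V (J b) (J' b)) ∂μ :=
          Finset.sum_congr rfl fun J _ => Finset.sum_congr rfl fun J' _ => h2 J J'
      _ = ∫ V, ∑ J : (Fin r × Fin k) → Fin n, ∑ J' : (Fin r × Fin k) → Fin n, (((∏ b, u b (J b)) * t J') * ∏ b, Pmat V (J b) (J' b)) ∂μ := by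
          rw [integral_finset_sum _ fun J _ => integrable_finset_sum _ fun J' _ =>
            ((integrable_prodP μ hsupp J J').const_mul _)]
          refine Finset.sum_congr rfl fun J _ => ?_
          rw [integral_finset_sum _ fun J' _ => ((integrable_prodP μ hsupp J J').const_mul _)]
      _ = ∫ V, ∑ J' : (Fin r × Fin k) → Fin n, (∏ b, Qvec V (u b) (J' b)) * t J' ∂μ :=
          integral_congr_ae (Filter.Eventually.of_forall hptdual)
  have hlam_le : lam ≤ ∫ V, g V ∂μ := by
    have h1 : lam * Ft ≤ (∫ V, g V ∂μ) * Ft := by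
      calc lam * Ft = |lam * (∑ J : (Fin r × Fin k) → Fin n, (∏ b, u b (J b)) * t J)| := by
            rw [abs_mul, abs_of_nonneg hlam_nonneg, hFt]
        _ = |∫ V, ∑ J' : (Fin r × Fin k) → Fin n, (∏ b, Qvec V (u b) (J' b)) * t J' ∂μ| := by rw [halpha]
        _ ≤ ∫ V, |∑ J' : (Fin r × Fin k) → Fin n, (∏ b, Qvec V (u b) (J' b)) * t J'| ∂μ := by
            simpa [Real.norm_eq_abs] using
              norm_integral_le_integral_norm
                (fun V => ∑ J' : (Fin r × Fin k) → Fin n, (∏ b, Qvec V (u b) (J' b)) * t J')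
        _ ≤ ∫ V, g V * Ft ∂μ :=
            integral_mono_ae hint_PhiQ.abs (hint_g.mul_const Ft) hPhiQ_bound
        _ = (∫ V, g V ∂μ) * Ft := integral_mul_const _ _
    exact le_of_mul_le_mul_right h1 hFt_pos
  -- Step 4: AM-GM and choice of the best coordinate
  set c : Fin r × Fin k → ℝ :=
    fun b => ∫ V, Real.sqrt (∑ i, (∑ j, V j i * u b j) ^ 2) ^ (r * k) ∂μ with hc
  have contxb : ∀ b : Fin r × Fin k,
      Continuous fun V : Fin n → Fin m → ℝ =>
        Real.sqrt (∑ i, (∑ j, V j i * u b j) ^ 2) ^ (r * k) := by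
    intro b
    refine (Real.continuous_sqrt.comp ?_).pow _
    exact continuous_finset_sum _ fun i _ =>
      (continuous_finset_sum _ fun j _ =>
        ((continuous_apply i).comp (continuous_apply j)).mul continuous_const).pow 2
  have hxb_bound : ∀ b : Fin r × Fin k, ∀ᵐ V ∂μ,
      |Real.sqrt (∑ i, (∑ j, V j i * u b j) ^ 2) ^ (r * k)| ≤ 1 := by
    intro b
    filter_upwards [hsupp] with V hV
    have h1 : Real.sqrt (∑ i, (∑ j, V j i * u b j) ^ 2) ≤ 1 := by
      rw [show (1:ℝ) = Real.sqrt 1 from Real.sqrt_one.symm]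
      exact Real.sqrt_le_sqrt (good_f3 hV (u b) (huunit b))
    rw [abs_of_nonneg (pow_nonneg (Real.sqrt_nonneg _) _)]
    exact pow_le_one₀ (Real.sqrt_nonneg _) h1
  have hint_xb : ∀ b : Fin r × Fin k,
      Integrable (fun V => Real.sqrt (∑ i, (∑ j, V j i * u b j) ^ 2) ^ (r * k)) μ :=
    fun b => integrable_of_bounded (contxb b).aestronglyMeasurable 1 (hxb_bound b)
  have hamgm : ∀ V, g V ≤ ((r * k : ℕ) : ℝ)⁻¹
      * ∑ b : Fin r × Fin k, Real.sqrt (∑ i, (∑ j, V j i * u b j) ^ 2) ^ (r * k) := by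
    intro V
    have h1 := amgm_pow (ι := Fin r × Fin k)
      (fun b => Real.sqrt (∑ i, (∑ j, V j i * u b j) ^ 2))
      (fun b => Real.sqrt_nonneg _)
    rw [hg]
    simpa [Fintype.card_prod] using h1
  have hgle : (∫ V, g V ∂μ) ≤ ((r * k : ℕ) : ℝ)⁻¹ * ∑ b : Fin r × Fin k, c b := by
    have h1 : (∫ V, g V ∂μ) ≤ ∫ V, (((r * k : ℕ) : ℝ)⁻¹
        * ∑ b : Fin r × Fin k, Real.sqrt (∑ i, (∑ j, V j i * u b j) ^ 2) ^ (r * k)) ∂μ :=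
      integral_mono_ae hint_g
        ((integrable_finset_sum _ fun b _ => hint_xb b).const_mul _)
        (Filter.Eventually.of_forall hamgm)
    calc (∫ V, g V ∂μ) ≤ _ := h1
      _ = ((r * k : ℕ) : ℝ)⁻¹ * ∑ b : Fin r × Fin k, c b := by
          rw [integral_const_mul, integral_finset_sum _ fun b _ => hint_xb b]
  obtain ⟨b₀, _, hb₀⟩ := Finset.exists_max_image Finset.univ c ⟨Classical.arbitrary _,
    Finset.mem_univ _⟩
  have hcsum : ∑ b : Fin r × Fin k, c b ≤ ((r * k : ℕ) : ℝ) * c b₀ := by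
    calc ∑ b : Fin r × Fin k, c b ≤ ∑ _b : Fin r × Fin k, c b₀ :=
        Finset.sum_le_sum fun b _ => hb₀ b (Finset.mem_univ b)
      _ = ((r * k : ℕ) : ℝ) * c b₀ := by
          rw [Finset.sum_const, Finset.card_univ, Fintype.card_prod, Fintype.card_fin,
            Fintype.card_fin, nsmul_eq_mul]
  have hrk_pos : (0:ℝ) < ((r * k : ℕ) : ℝ) := by
    have : 0 < r * k := Nat.mul_pos hr0 hk
    exact_mod_cast this
  have hlam_le2 : lam ≤ c b₀ := by
    calc lam ≤ ∫ V, g V ∂μ := hlam_le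
      _ ≤ ((r * k : ℕ) : ℝ)⁻¹ * ∑ b : Fin r × Fin k, c b := hgle
      _ ≤ ((r * k : ℕ) : ℝ)⁻¹ * (((r * k : ℕ) : ℝ) * c b₀) :=
          mul_le_mul_of_nonneg_left hcsum (by positivity)
      _ = c b₀ := by
          rw [← mul_assoc, inv_mul_cancel₀ hrk_pos.ne', one_mul]
  -- Final assembly
  refine ⟨u b₀, huunit b₀, ?_⟩
  have hTnorm : Real.sqrt (∑ j, T j ^ 2) ^ a = (∑ j, T j ^ 2) ^ r := by
    have h0 : (0:ℝ) ≤ ∑ j, T j ^ 2 := Finset.sum_nonneg fun _ _ => sq_nonneg _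
    rw [ha2, show r + r = 2 * r from (two_mul r).symm, pow_mul, Real.sq_sqrt h0]
  have hpow_nonneg : (0:ℝ) ≤ (∑ j, T j ^ 2) ^ r :=
    pow_nonneg (Finset.sum_nonneg fun _ _ => sq_nonneg _) r
  calc (∫ V, Real.sqrt (∑ i : Fin k → Fin m,
          (∑ j : Fin k → Fin n, (∏ b : Fin k, V (j b) (i b)) * T j) ^ 2) ^ a ∂μ)
      = ∑ J, ∑ J', (S J * S J') * A J J' := hLHS
    _ ≤ lam * ∑ J, S J ^ 2 := hmax S
    _ = lam * (∑ j, T j ^ 2) ^ r := by rw [hSnorm]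
    _ ≤ c b₀ * (∑ j, T j ^ 2) ^ r := mul_le_mul_of_nonneg_right hlam_le2 hpow_nonneg
    _ = (∫ V, Real.sqrt (∑ i : Fin m, (∑ j : Fin n, V j i * u b₀ j) ^ 2) ^ (a * k / 2) ∂μ)
          * Real.sqrt (∑ j, T j ^ 2) ^ a := by
        rw [hTnorm, hp, hc]
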